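/- The subshift S generated by the words w_n contains no periodic points: there is no x ∈ S and p ≥ 1 with σ^p(x) = x. -/

import Mathlib

inductive GLetter | a | B | C | D
deriving DecidableEq

def alphaN (n : ℕ) : GLetter :=
  if n % 3 = 0 then GLetter.B else if n % 3 = 1 then GLetter.D else GLetter.C

def w : ℕ → List GLetter
  | 0 => []
  | 1 => [GLetter.a]
  | (n+2) => w (n+1) ++ [alphaN (n+1)] ++ w (n+1)

def inLanguage (u : List GLetter) : Prop := ∃ n : ℕ, 1 ≤ n ∧ u <:+: w n

/-- The finite subword of `x` of length `m` starting at position `i`. -/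
def extract (x : ℤ → GLetter) (i : ℤ) (m : ℕ) : List GLetter :=
  List.ofFn (fun j : Fin m => x (i + (j.val : ℤ)))

/-- The subshift `S` generated by the words `w n`. -/
def Subs : Set (ℤ → GLetter) := {x | ∀ (i : ℤ) (m : ℕ), inLanguage (extract x i m)}

/-- 2-adic valuation. -/
def val2 (n : ℕ) : ℕ :=
  if h : n = 0 ∨ n % 2 = 1 then 0 else val2 (n / 2) + 1
decreasing_by
  push_neg at h
  exact Nat.div_lt_self (Nat.pos_of_ne_zero h.1) one_lt_two

lemma val2_odd {n : ℕ} (h : n % 2 = 1) : val2 n = 0 := by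
  rw [val2]; simp [h]

lemma val2_two_mul {n : ℕ} (h : n ≠ 0) : val2 (2 * n) = val2 n + 1 := by
  rw [val2]
  have h1 : ¬ (2 * n = 0 ∨ 2 * n % 2 = 1) := by omega
  simp only [h1, dite_false]
  congr 1
  congr 1
  omega

lemma val2_pow_mul (v q : ℕ) : val2 (2 ^ v * (2 * q + 1)) = v := by
  induction v with
  | zero => simpa using val2_odd (n := 2 * q + 1) (by omega)
  | succ v ih =>
      have : 2 ^ (v + 1) * (2 * q + 1) = 2 * (2 ^ v * (2 * q + 1)) := by ring
      rw [this, val2_two_mul (by positivity), ih]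

lemma val2_decomp : ∀ n : ℕ, n ≠ 0 → ∃ q, n = 2 ^ (val2 n) * (2 * q + 1) := by
  intro n
  induction n using Nat.strong_induction_on with
  | _ n ih =>
    intro hn
    rcases Nat.even_or_odd n with he | ho
    · obtain ⟨m, hm⟩ := he
      have hm' : n = 2 * m := by omega
      have hm0 : m ≠ 0 := by omega
      obtain ⟨q, hq⟩ := ih m (by omega) hm0
      refine ⟨q, ?_⟩
      rw [hm', val2_two_mul hm0, pow_succ]
      conv_lhs => rw [hq]
      ring
    · have h1 : n % 2 = 1 := Nat.odd_iff.mp ho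
      exact ⟨n / 2, by rw [val2_odd h1]; omega⟩

lemma val2_le {n : ℕ} (h : n ≠ 0) : val2 n ≤ n := by
  obtain ⟨q, hq⟩ := val2_decomp n h
  have h1 : val2 n < 2 ^ (val2 n) := Nat.lt_two_pow_self
  have h2 : 2 ^ (val2 n) ≤ n := by
    conv_rhs => rw [hq]
    exact Nat.le_mul_of_pos_right _ (by omega)
  exact (Nat.le_of_lt h1).trans h2

lemma val2_add {s t : ℕ} (hs : s ≠ 0) (ht : t ≠ 0) (h : val2 s < val2 t) :
    val2 (s + t) = val2 s := by
  obtain ⟨q, hq⟩ := val2_decomp s hs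
  obtain ⟨r, hr⟩ := val2_decomp t ht
  have hb : val2 t = val2 s + (val2 t - val2 s - 1) + 1 := by omega
  set c := val2 t - val2 s - 1
  have : s + t = 2 ^ (val2 s) * (2 * (q + 2 ^ c * (2 * r + 1)) + 1) := by
    conv_lhs => rw [hq, hr, hb]
    ring
  rw [this, val2_pow_mul]

/-- The "ruler" letter at (1-indexed) position `t`. -/
def rl (t : ℕ) : GLetter :=
  if val2 t = 0 then GLetter.a else alphaN (val2 t)

lemma wlen : ∀ m, (w m).length = 2 ^ m - 1
  | 0 => rfl
  | 1 => rfl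
  | (n+2) => by
      have h := wlen (n + 1)
      have h1 : 1 ≤ 2 ^ (n + 1) := Nat.one_le_two_pow
      have h2 : 2 ^ (n + 2) = 2 * 2 ^ (n + 1) := by ring
      simp [w, h]
      omega

lemma wget : ∀ m, ∀ k, (hk : k < (w m).length) → (w m)[k] = rl (k + 1)
  | 0 => by intro k hk; simp [w] at hk
  | 1 => by
      intro k hk
      have hk0 : k = 0 := by
        have : (w 1).length = 1 := rfl
        omega
      subst hk0
      have h1 : (w 1)[0] = GLetter.a := rfl
      rw [h1, rl, val2_odd (n := 1) rfl]
      simp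
  | (n+2) => by
      intro k hk
      have hL : (w (n+1)).length = 2 ^ (n+1) - 1 := wlen (n+1)
      have h1 : 1 ≤ 2 ^ (n + 1) := Nat.one_le_two_pow
      have hk' : k < ((w (n+1) ++ [alphaN (n+1)]) ++ w (n+1)).length := hk
      show ((w (n+1) ++ [alphaN (n+1)]) ++ w (n+1))[k]'hk' = rl (k+1)
      rcases lt_trichotomy k (2 ^ (n+1) - 1) with hlt | heq | hgt
      · rw [List.getElem_append_left (by simp [hL] <;> omega),
          List.getElem_append_left (by omega)]
        exact wget (n+1) k (by omega)
      · subst heq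
        rw [List.getElem_append_left (by simp [hL] <;> omega),
          List.getElem_append_right (by omega)]
        have hval : val2 (2 ^ (n+1) - 1 + 1) = n + 1 := by
          have : 2 ^ (n+1) - 1 + 1 = 2 ^ (n+1) * (2 * 0 + 1) := by omega
          rw [this, val2_pow_mul]
        simp [rl, hval, hL]
      · have hklen : k < 2 ^ (n+2) - 1 := by
          have := wlen (n+2); omega
        have hlen1 : (w (n+1) ++ [alphaN (n+1)]).length = 2 ^ (n+1) := by
          simp [hL] <;> omega
        rw [List.getElem_append_right (by omega)]
        have hk2 : k - (w (n+1) ++ [alphaN (n+1)]).length < (w (n+1)).length := by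
          rw [hlen1, hL]
          have h2 : 2 ^ (n + 2) = 2 * 2 ^ (n + 1) := by ring
          omega
        rw [wget (n+1) _ hk2]
        rw [hlen1]
        -- rl (k - 2^(n+1) + 1) = rl (k+1)
        have hs0 : k - 2 ^ (n+1) + 1 ≠ 0 := by omega
        have hslt : val2 (k - 2 ^ (n+1) + 1) < n + 1 := by
          have hle := val2_le hs0
          have h2 : 2 ^ (n + 2) = 2 * 2 ^ (n + 1) := by ring
          obtain ⟨q, hq⟩ := val2_decomp _ hs0
          by_contra hcon
          push_neg at hcon
          have : 2 ^ (n+1) ≤ 2 ^ (val2 (k - 2 ^ (n+1) + 1)) :=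
            Nat.pow_le_pow_right (by norm_num) hcon
          have : 2 ^ (n+1) ≤ k - 2 ^ (n+1) + 1 := by
            calc 2 ^ (n+1) ≤ 2 ^ (val2 (k - 2 ^ (n+1) + 1)) := this
            _ ≤ 2 ^ (val2 (k - 2 ^ (n+1) + 1)) * (2 * q + 1) := Nat.le_mul_of_pos_right _ (by omega)
            _ = k - 2 ^ (n+1) + 1 := hq.symm
          omega
        have hval : val2 (k + 1) = val2 (k - 2 ^ (n+1) + 1) := by
          have hpow : val2 (2 ^ (n+1)) = n + 1 := by
            have : 2 ^ (n+1) = 2 ^ (n+1) * (2 * 0 + 1) := by ring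
            conv_lhs => rw [this]
            exact val2_pow_mul _ _
          have := val2_add (s := k - 2 ^ (n+1) + 1) (t := 2 ^ (n+1)) hs0 (by positivity)
            (by rw [hpow]; exact hslt)
          rw [← this]
          congr 1
          omega
        simp [rl, hval]

lemma alphaN_ne_a (n : ℕ) : alphaN n ≠ GLetter.a := by
  unfold alphaN
  split_ifs <;> simp

lemma alphaN_succ_ne (n : ℕ) : alphaN (n + 1) ≠ alphaN n := by
  unfold alphaN
  have h : n % 3 = 0 ∨ n % 3 = 1 ∨ n % 3 = 2 := by omega
  rcases h with h | h | h <;>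
    · have h' : (n + 1) % 3 = (n % 3 + 1) % 3 := by omega
      rw [h'] at *
      simp [h]

theorem stmt6 : ∀ x ∈ Subs, ∀ p : ℕ, 1 ≤ p → ¬ (∀ i : ℤ, x (i + (p : ℤ)) = x i) := by
  intro x hx p hp hper
  have hp0 : p ≠ 0 := by omega
  set wv := val2 p with hwv
  set v := wv + 1 with hv
  set M := 2 ^ (v + 2) + p with hM
  obtain ⟨n, hn1, s, t, hst⟩ := hx 0 M
  set i := s.length with hi
  -- x j = rl (i + j + 1) for j < M
  have key : ∀ j : ℕ, j < M → x j = rl (i + j + 1) := by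
    intro j hj
    have hu : (extract x 0 M)[j]'(by simp [extract] <;> omega) = x j := by
      simp [extract]
    have hlen : (w n).length = i + M + t.length := by
      rw [← hst]; simp [extract] <;> omega
    have hij : i + j < (w n).length := by omega
    have h2 : (w n)[i + j]'hij = (extract x 0 M)[j]'(by simp [extract] <;> omega) := by
      rw [List.getElem_of_eq hst.symm hij]
      rw [List.getElem_append_left (as := s ++ extract x 0 M) (bs := t)
          (by simp [extract] <;> omega),
        List.getElem_append_right (by omega)]
      congr 1
      omega
    rw [← hu, ← h2, wget n _ hij]
  -- find position T with val2 T = v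
  set e := 2 ^ (v + 1) with he
  set d := (i + 1) / e with hd
  set T := 2 ^ v * (2 * (d + 1) + 1) with hT
  have hvT : val2 T = v := val2_pow_mul v (d + 1)
  have he2 : e = 2 * 2 ^ v := by rw [he]; ring
  have h4 : 2 ^ (v + 2) = 4 * 2 ^ v := by ring
  have hTeq : T = e * d + e + 2 ^ v := by rw [hT, he]; ring
  have hdm : e * d + (i + 1) % e = i + 1 := by
    rw [hd]; exact Nat.div_add_mod _ _
  have hmlt : (i + 1) % e < e := Nat.mod_lt _ (by positivity)
  have hpos : 1 ≤ 2 ^ v := Nat.one_le_two_pow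
  have hAT : i + 1 ≤ T := by omega
  set j := T - (i + 1) with hj
  have hjp : j + p < M := by omega
  have hxj : x j = alphaN v := by
    rw [key j (by omega), show i + j + 1 = T from by omega]
    simp [rl, hvT, hv]
  have hxjp : x (↑(j + p)) = rl (T + p) := by
    rw [key (j + p) hjp, show i + (j + p) + 1 = T + p from by omega]
  have hperj : x (↑(j + p)) = x j := by
    have := hper (j : ℤ)
    push_cast
    push_cast at this
    exact this
  have hval : val2 (T + p) = wv := by
    rw [show T + p = p + T from by omega]
    exact val2_add hp0 (by positivity) (by rw [hvT]; omega)
  have hcontra : alphaN v = rl (T + p) := by rw [← hxj, ← hperj, hxjp]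
  rcases Nat.eq_zero_or_pos wv with h0 | h0
  · rw [rl, hval, h0] at hcontra
    simp at hcontra
    exact alphaN_ne_a v hcontra
  · rw [rl, hval, if_neg (by omega)] at hcontra
    exact alphaN_succ_ne wv (by rw [← hv] at *; exact hcontra)
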